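/- In a dagger category with dagger equalizers where the kernel-factorization holds, every split monomorphism is a dagger monomorphism: assuming every isomorphism is a dagger isomorphism and every morphism t factors as t = k ∘ e with k a dagger monomorphism and e an epimorphism, every split monomorphism t satisfies t† ∘ t = id. -/
import Mathlib


open CategoryTheory

/-- A dagger structure on a category: a contravariant identity-on-objects
involutive endofunctor. -/
class DaggerCategory (C : Type*) [Category C] where
  dag : ∀ {X Y : C}, (X ⟶ Y) → (Y ⟶ X)
  dag_id : ∀ X : C, dag (𝟙 X) = 𝟙 X
  dag_dag : ∀ {X Y : C} (f : X ⟶ Y), dag (dag f) = f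
  dag_comp : ∀ {X Y Z : C} (f : X ⟶ Y) (g : Y ⟶ Z), dag (f ≫ g) = dag g ≫ dag f

open DaggerCategory

theorem split_mono_is_dagger_mono
    {C : Type*} [Category C] [DaggerCategory C]
    (iso_dagger : ∀ {H L : C} (r : H ≅ L), r.inv = dag r.hom)
    (factor : ∀ {H K : C} (t : H ⟶ K), ∃ (E : C) (e : H ⟶ E) (k : E ⟶ K),
      Epi e ∧ k ≫ dag k = 𝟙 E ∧ t = e ≫ k) :
    ∀ {H K : C} (t : H ⟶ K), (∃ l : K ⟶ H, t ≫ l = 𝟙 H) → t ≫ dag t = 𝟙 H := by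
  intro H K t ⟨l, hl⟩
  obtain ⟨E, e, k, he, hk, ht⟩ := factor t
  have h1 : e ≫ (k ≫ l) = 𝟙 H := by rw [← Category.assoc, ← ht, hl]
  have h2 : (k ≫ l) ≫ e = 𝟙 E := by
    have : e ≫ (k ≫ l) ≫ e = e ≫ 𝟙 E := by
      rw [Category.comp_id, ← Category.assoc, h1, Category.id_comp]
    exact he.left_cancellation _ _ this
  let r : H ≅ E := ⟨e, k ≫ l, h1, h2⟩
  have hde : dag e = k ≫ l := by
    have := iso_dagger r
    simpa [r] using this.symm
  rw [ht, dag_comp, Category.assoc, ← Category.assoc k (dag k) (dag e), hk,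
    Category.id_comp, hde, h1]
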